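/- Let g be a symmetric bilinear form of signature (p, 2m-p) on R^{2m} compatible with a complex structure J (g(J·,J·) = g), and suppose the standard hyperplane R^{2m-1} is g-nondegenerate. Let v ∈ R^{2m-1} be a nonzero vector g-orthogonal to W = R^{2m-1} ∩ J(R^{2m-1}). Let h = u(g,J) = {F ∈ gl(J) : F g-skew}. Then the space h_2 = {F ∈ h : F|_W = 0} equals span(v ⊗ (Jv)^♭ − Jv ⊗ v^♭) if that element lies in h, and is {0} otherwise. (Here (v⊗α)(x) = α(x)v and w^♭ = g(w,·).) -/

import Mathlib

theorem stmt_15 (m : ℕ)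
    (J : Module.End ℝ (Fin (2*m+2) → ℝ)) (hJ : J * J = -1)
    (g : (Fin (2*m+2) → ℝ) →ₗ[ℝ] (Fin (2*m+2) → ℝ) →ₗ[ℝ] ℝ)
    (hnd : ∀ x, (∀ y, g x y = 0) → x = 0)
    (hsymm : ∀ x y, g x y = g y x)
    (hgJ : ∀ x y, g (J x) (J y) = g x y)
    (P : Submodule ℝ (Fin (2*m+2) → ℝ))
    (hP : P = LinearMap.ker
      (LinearMap.proj (⟨2*m+1, by omega⟩ : Fin (2*m+2)) : (Fin (2*m+2) → ℝ) →ₗ[ℝ] ℝ))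
    (hPnd : ∀ x ∈ P, (∀ y ∈ P, g x y = 0) → x = 0)
    (v : Fin (2*m+2) → ℝ) (hvP : v ∈ P) (hv0 : v ≠ 0)
    (hvW : ∀ w ∈ P, J w ∈ P → g v w = 0)
    (E : Module.End ℝ (Fin (2*m+2) → ℝ))
    (hE : ∀ x, E x = g (J v) x • v - g v x • J v) :
    ((E * J = J * E ∧ ∀ x y, g (E x) y = - g x (E y)) →
      ∀ F : Module.End ℝ (Fin (2*m+2) → ℝ),
        ((F * J = J * F ∧ ∀ x y, g (F x) y = - g x (F y)) ∧
          (∀ w ∈ P, J w ∈ P → F w = 0)) ↔ ∃ c : ℝ, F = c • E) ∧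
    (¬ (E * J = J * E ∧ ∀ x y, g (E x) y = - g x (E y)) →
      ∀ F : Module.End ℝ (Fin (2*m+2) → ℝ),
        ((F * J = J * F ∧ ∀ x y, g (F x) y = - g x (F y)) ∧
          (∀ w ∈ P, J w ∈ P → F w = 0)) ↔ F = 0) := by
  classical
  set i0 : Fin (2*m+2) := ⟨2*m+1, by omega⟩ with hi0
  have hJJ : ∀ x, J (J x) = -x := by
    intro x
    have := congrArg (fun f : Module.End ℝ (Fin (2*m+2) → ℝ) => f x) hJ
    simpa [Module.End.mul_apply] using this
  have hgJ' : ∀ x y, g x (J y) = - g (J x) y := by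
    intro x y
    have h1 : g (J x) (J (J y)) = g x (J y) := hgJ x (J y)
    rw [hJJ y, map_neg] at h1
    linarith
  have hgJvv : g (J v) v = 0 := by
    have h1 : g v (J v) = - g (J v) v := hgJ' v v
    have h2 : g v (J v) = g (J v) v := hsymm v (J v)
    linarith
  have hgvJv : g v (J v) = 0 := (hsymm v (J v)).trans hgJvv
  have hrefl : LinearMap.IsRefl g := fun x y h => (hsymm y x).trans h
  set W : Submodule ℝ (Fin (2*m+2) → ℝ) := P ⊓ P.comap J with hW
  have hmemW : ∀ x, x ∈ W ↔ x ∈ P ∧ J x ∈ P := by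
    intro x
    simp [hW, Submodule.mem_inf, Submodule.mem_comap]
  set O := LinearMap.BilinForm.orthogonal g W with hO
  have hgvw : ∀ w ∈ P, J w ∈ P → g v w = 0 ∧ g (J v) w = 0 := by
    intro w hw hjw
    refine ⟨hvW w hw hjw, ?_⟩
    have h1 : g v (J w) = - g (J v) w := hgJ' v w
    have h2 : g v (J w) = 0 := hvW (J w) hjw (by rw [hJJ w]; exact P.neg_mem hw)
    linarith
  have hvO : v ∈ O := by
    refine LinearMap.BilinForm.mem_orthogonal_iff.2 fun w hw => ?_
    have := (hgvw w ((hmemW w).1 hw).1 ((hmemW w).1 hw).2).1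
    exact (hsymm w v).trans this
  have hJvO : J v ∈ O := by
    refine LinearMap.BilinForm.mem_orthogonal_iff.2 fun w hw => ?_
    have := (hgvw w ((hmemW w).1 hw).1 ((hmemW w).1 hw).2).2
    exact (hsymm w (J v)).trans this
  have hli : LinearIndependent ℝ ![v, J v] := by
    rw [LinearIndependent.pair_iff]
    intro s t hst
    have h2 : s • J v + t • (-v) = 0 := by
      have := congrArg (fun x => J x) hst
      simpa [map_add, map_smul, hJJ v] using this
    have h3 : (s^2 + t^2) • v = 0 := by
      have h5 : (s^2 + t^2) • v = s • (s • v + t • J v) - t • (s • J v + t • (-v)) := by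
        module
      rw [hst, h2] at h5
      simpa using h5
    have h6 : s^2 + t^2 = 0 := by
      rcases smul_eq_zero.1 h3 with h | h
      · exact h
      · exact absurd h hv0
    constructor <;> nlinarith
  set S := Submodule.span ℝ ({v, J v} : Set (Fin (2*m+2) → ℝ)) with hS
  have hSO : S ≤ O := by
    rw [hS, Submodule.span_le]
    rintro x hx
    simp only [Set.mem_insert_iff, Set.mem_singleton_iff] at hx
    rcases hx with rfl | rfl
    · exact hvO
    · exact hJvO
  have hfinS : Module.finrank ℝ S = 2 := by
    have h1 := finrank_span_eq_card hli
    have h2 : Set.range ![v, J v] = ({v, J v} : Set (Fin (2*m+2) → ℝ)) := by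
      ext y
      simp [Fin.exists_fin_two, eq_comm]
      tauto
    rw [h2] at h1
    simpa using h1
  have hfinV : Module.finrank ℝ (Fin (2*m+2) → ℝ) = 2*m+2 := Module.finrank_fin_fun ℝ
  have hfinW : 2*m ≤ Module.finrank ℝ W := by
    have hker : W = LinearMap.ker
        ((LinearMap.proj i0 : (Fin (2*m+2) → ℝ) →ₗ[ℝ] ℝ).prod
          ((LinearMap.proj i0 : (Fin (2*m+2) → ℝ) →ₗ[ℝ] ℝ) ∘ₗ (J : (Fin (2*m+2) → ℝ) →ₗ[ℝ] (Fin (2*m+2) → ℝ)))) := by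
      ext x
      simp [hW, hP, Submodule.mem_inf, Submodule.mem_comap, LinearMap.mem_ker,
        LinearMap.prod_apply, Prod.ext_iff]
    have h1 := LinearMap.finrank_range_add_finrank_ker
        ((LinearMap.proj i0 : (Fin (2*m+2) → ℝ) →ₗ[ℝ] ℝ).prod
          ((LinearMap.proj i0 : (Fin (2*m+2) → ℝ) →ₗ[ℝ] ℝ) ∘ₗ (J : (Fin (2*m+2) → ℝ) →ₗ[ℝ] (Fin (2*m+2) → ℝ))))
    have h2 : Module.finrank ℝ (LinearMap.range
        ((LinearMap.proj i0 : (Fin (2*m+2) → ℝ) →ₗ[ℝ] ℝ).prod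
          ((LinearMap.proj i0 : (Fin (2*m+2) → ℝ) →ₗ[ℝ] ℝ) ∘ₗ (J : (Fin (2*m+2) → ℝ) →ₗ[ℝ] (Fin (2*m+2) → ℝ))))) ≤ 2 := by
      refine le_trans (Submodule.finrank_le _) ?_
      simp
    rw [hfinV] at h1
    rw [hker]
    omega
  have hfinO : Module.finrank ℝ O ≤ 2 := by
    rw [hO, LinearMap.BilinForm.finrank_orthogonal (hrefl.nondegenerate_iff_separatingLeft.2 hnd) W, hfinV]
    omega
  have hOS : S = O := Submodule.eq_of_le_of_finrank_le hSO (by omega)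
  have hvi0 : v i0 = 0 := by
    rw [hP] at hvP
    simpa using hvP
  have hdisj : Disjoint W O := by
    rw [Submodule.disjoint_def]
    intro x hxW hxO
    rw [← hOS, hS] at hxO
    obtain ⟨a, b, hab⟩ := Submodule.mem_span_pair.1 hxO
    obtain ⟨hx1, hx2⟩ := (hmemW x).1 hxW
    rw [hP, LinearMap.mem_ker] at hx1 hx2
    simp only [LinearMap.proj_apply] at hx1 hx2
    by_cases hc : (J v) i0 = 0
    · exfalso
      have hJvP : J v ∈ P := by rw [hP]; simpa using hc
      have hfinP : Module.finrank ℝ P = 2*m+1 := by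
        have hsurj : Function.Surjective (LinearMap.proj i0 : (Fin (2*m+2) → ℝ) →ₗ[ℝ] ℝ) := by
          intro r
          exact ⟨Pi.single i0 r, by simp⟩
        have h1 := LinearMap.finrank_range_add_finrank_ker
          (LinearMap.proj i0 : (Fin (2*m+2) → ℝ) →ₗ[ℝ] ℝ)
        rw [LinearMap.range_eq_top.2 hsurj, hfinV] at h1
        rw [hP]
        simp only [finrank_top] at h1
        have : Module.finrank ℝ ℝ = 1 := Module.finrank_self ℝ
        omega
      have hfinPo : Module.finrank ℝ (LinearMap.BilinForm.orthogonal g P) = 1 := by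
        rw [LinearMap.BilinForm.finrank_orthogonal (hrefl.nondegenerate_iff_separatingLeft.2 hnd) P, hfinV, hfinP]
        omega
      have hne : LinearMap.BilinForm.orthogonal g P ≠ ⊥ := by
        intro h
        rw [h, finrank_bot] at hfinPo
        omega
      obtain ⟨z, hz, hz0⟩ := Submodule.exists_mem_ne_zero_of_ne_bot hne
      have hzO : z ∈ O := by
        rw [hO]
        exact LinearMap.BilinForm.orthogonal_le (by rw [hW]; exact inf_le_left) hz
      have hzP : z ∈ P := by
        rw [← hOS, hS] at hzO
        have hsub : Submodule.span ℝ ({v, J v} : Set (Fin (2*m+2) → ℝ)) ≤ P := by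
          rw [Submodule.span_le]
          rintro y hy
          simp only [Set.mem_insert_iff, Set.mem_singleton_iff] at hy
          rcases hy with rfl | rfl
          · exact hvP
          · exact hJvP
        exact hsub hzO
      exact hz0 (hPnd z hzP fun y hy => (hsymm z y).trans (hz y hy))
    · have hxv : x i0 = b * (J v) i0 := by
        rw [← hab]
        simp [hvi0]
      have hxjv : (J x) i0 = a * (J v) i0 := by
        have : J x = a • J v + b • (-v) := by
          rw [← hab]
          simp [map_add, map_smul, hJJ v]
        rw [this]
        simp [hvi0]
      rw [hx1] at hxv
      rw [hx2] at hxjv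
      have ha : a = 0 := by
        rcases mul_eq_zero.1 hxjv.symm with h | h
        · exact h
        · exact absurd h hc
      have hb : b = 0 := by
        rcases mul_eq_zero.1 hxv.symm with h | h
        · exact h
        · exact absurd h hc
      rw [← hab, ha, hb]
      simp
  have hcompl : IsCompl W O :=
    (LinearMap.BilinForm.isCompl_orthogonal_iff_disjoint hrefl).2 hdisj
  have hdecomp : ∀ x : Fin (2*m+2) → ℝ, ∃ w ∈ W, ∃ o ∈ O, w + o = x :=
    fun x => by
      obtain ⟨a, b, ha, hb, h⟩ := Submodule.codisjoint_iff_exists_add_eq.mp hcompl.codisjoint x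
      exact ⟨a, ha, b, hb, h⟩
  have hgvv : g v v ≠ 0 := by
    intro h0
    apply hv0
    apply hnd v
    intro y
    obtain ⟨w, hw, o, hoO, rfl⟩ := hdecomp y
    rw [← hOS, hS] at hoO
    obtain ⟨a, b, rfl⟩ := Submodule.mem_span_pair.1 hoO
    have h1 : g v w = 0 := (hgvw w ((hmemW w).1 hw).1 ((hmemW w).1 hw).2).1
    simp [map_add, map_smul, h1, h0, hgvJv]
  have hEcomm : E * J = J * E := by
    apply LinearMap.ext
    intro x
    rw [Module.End.mul_apply, Module.End.mul_apply, hE (J x), hE x, hgJ v x, hgJ' v x,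
      map_sub, map_smul, map_smul, hJJ v]
    module
  have hEskew : ∀ x y, g (E x) y = - g x (E y) := by
    intro x y
    rw [hE x, hE y]
    simp only [map_sub, map_smul, LinearMap.sub_apply, LinearMap.smul_apply, smul_eq_mul]
    rw [hsymm x v, hsymm x (J v)]
    ring
  have hEP : ∀ w ∈ P, J w ∈ P → E w = 0 := by
    intro w hw hjw
    rw [hE w, (hgvw w hw hjw).1, (hgvw w hw hjw).2]
    simp
  have hEv : E v = -(g v v • J v) := by
    rw [hE v, hgJvv]
    simp
  have hEJv : E (J v) = g v v • v := by
    rw [hE (J v), hgJ v v, hgvJv]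
    simp
  refine ⟨fun _ F => ?_, fun hne => absurd ⟨hEcomm, hEskew⟩ hne⟩
  constructor
  · rintro ⟨⟨hFJ, hFskew⟩, hFP⟩
    have hFW : ∀ w ∈ W, F w = 0 :=
      fun w hw => hFP w ((hmemW w).1 hw).1 ((hmemW w).1 hw).2
    have hFvO : F v ∈ O := by
      refine LinearMap.BilinForm.mem_orthogonal_iff.2 fun w hw => ?_
      have h1 := hFskew w v
      rw [hFW w hw] at h1
      simp only [map_zero, LinearMap.zero_apply] at h1
      have : g w (F v) = 0 := by linarith
      exact this
    rw [← hOS, hS] at hFvO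
    obtain ⟨a, b, hab⟩ := Submodule.mem_span_pair.1 hFvO
    have ha : a = 0 := by
      have h1 : g (F v) v = - g v (F v) := hFskew v v
      have h2 : g v (F v) = g (F v) v := hsymm v (F v)
      have h3 : g (F v) v = 0 := by linarith
      rw [← hab] at h3
      simp only [map_add, map_smul, LinearMap.add_apply, LinearMap.smul_apply, smul_eq_mul,
        hgJvv, mul_zero, add_zero] at h3
      rcases mul_eq_zero.1 h3 with h | h
      · exact h
      · exact absurd h hgvv
    have hFv : F v = b • J v := by
      rw [← hab, ha]
      simp
    have hFJv : F (J v) = -(b • v) := by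
      have h1 : F (J v) = J (F v) := by
        have := LinearMap.ext_iff.1 hFJ v
        simpa [Module.End.mul_apply] using this
      rw [h1, hFv, map_smul, hJJ v]
      simp
    refine ⟨-b / g v v, ?_⟩
    apply LinearMap.ext
    intro x
    obtain ⟨w, hw, o, hoO, hx⟩ := hdecomp x
    rw [← hOS, hS] at hoO
    obtain ⟨s, t, ho⟩ := Submodule.mem_span_pair.1 hoO
    rw [← hx, ← ho]
    have hEw : E w = 0 := hEP w ((hmemW w).1 hw).1 ((hmemW w).1 hw).2
    simp only [map_add, map_smul, LinearMap.smul_apply, hFv, hFJv, hEv, hEJv,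
      hFW w hw, hEw, zero_add, smul_zero, smul_neg, smul_smul]
    match_scalars
    · field_simp
    · field_simp
  · rintro ⟨c, rfl⟩
    refine ⟨⟨?_, ?_⟩, ?_⟩
    · rw [smul_mul_assoc, mul_smul_comm, hEcomm]
    · intro x y
      simp only [LinearMap.smul_apply, map_smul, smul_eq_mul]
      rw [hEskew x y]
      ring
    · intro w hw hjw
      simp [LinearMap.smul_apply, hEP w hw hjw]
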